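/- Fix ε > 0 and define, for t > 0, u^ε(0,t) := −2ε log[ (4πεt)^{−1/2} ∫_ℝ e^{−y²/(4εt) + |y|/(2ε)} dy ]. Then lim_{t→0⁺} ( u^ε(0,t) + t/2 ) / √(tε) = −2/√π. -/

import Mathlib

noncomputable section

open MeasureTheory Set Filter

namespace Statement7Aux

lemma integral_comp_add_right_Ioi' (g : ℝ → ℝ) (a d : ℝ) :
    (∫ x in Ioi a, g (x + d)) = ∫ x in Ioi (a + d), g x := by
  have A : MeasurableEmbedding fun x : ℝ => x + d :=
    (Homeomorph.addRight d).isClosedEmbedding.measurableEmbedding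
  have h := A.setIntegral_map (μ := volume) (g := g) (s := Ioi (a + d))
  rw [map_add_right_eq_self volume d] at h
  rw [h, show (fun x : ℝ => x + d) ⁻¹' Ioi (a + d) = Ioi a from by ext x; simp]

/-- Lower gaussian tail `∫_{-a}^∞ e^{-z²} dz`. -/
def Φ (a : ℝ) : ℝ := ∫ z in Ioi (-a), Real.exp (-z ^ 2)

lemma gauss_integrable : Integrable (fun z : ℝ => Real.exp (-z ^ 2)) := by
  have := integrable_exp_neg_mul_sq (b := (1:ℝ)) one_pos
  simpa using this

lemma Φ_eq_Iic (a : ℝ) : Φ a = ∫ x in Iic a, Real.exp (-x ^ 2) := by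
  have h := integral_comp_neg_Iic a (fun z : ℝ => Real.exp (-z ^ 2))
  rw [Φ, ← h]
  refine setIntegral_congr_fun measurableSet_Iic fun x _ => ?_
  simp

lemma Φ_pos (a : ℝ) : 0 < Φ a := by
  rw [Φ_eq_Iic]
  rw [setIntegral_pos_iff_support_of_nonneg_ae
    (Eventually.of_forall fun x => (Real.exp_pos _).le) gauss_integrable.integrableOn]
  have hsupp : Function.support (fun x : ℝ => Real.exp (-x ^ 2)) = Set.univ := by
    ext x; simp [Function.support, Real.exp_ne_zero]
  rw [hsupp, Set.univ_inter, Real.volume_Iic]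
  simp

lemma Φ_zero : Φ 0 = Real.sqrt Real.pi / 2 := by
  have h := integral_gaussian_Ioi (1:ℝ)
  rw [Φ, neg_zero]
  simpa using h

lemma Φ_hasDeriv : HasDerivAt Φ 1 0 := by
  have hint : ∀ x : ℝ, Φ x = Φ 0 + ∫ t in (0:ℝ)..x, Real.exp (-t ^ 2) := by
    intro x
    have h := intervalIntegral.integral_Iic_sub_Iic (f := fun z : ℝ => Real.exp (-z ^ 2))
      (a := (0:ℝ)) (b := x) gauss_integrable.integrableOn gauss_integrable.integrableOn
    rw [Φ_eq_Iic, Φ_eq_Iic, ← h]; ring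
  have hd : HasDerivAt (fun x => ∫ t in (0:ℝ)..x, Real.exp (-t ^ 2))
      (Real.exp (-(0:ℝ) ^ 2)) 0 := by
    refine intervalIntegral.integral_hasDerivAt_right
      (gauss_integrable.intervalIntegrable)
      ?_ ?_
    · exact (Continuous.stronglyMeasurable (by continuity)).stronglyMeasurableAtFilter
    · exact (Continuous.continuousAt (by continuity))
  have : HasDerivAt (fun x => Φ 0 + ∫ t in (0:ℝ)..x, Real.exp (-t ^ 2))
      (Real.exp (-(0:ℝ) ^ 2)) 0 := hd.const_add _
  have h2 : HasDerivAt Φ (Real.exp (-(0:ℝ) ^ 2)) 0 := by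
    refine this.congr_of_eventuallyEq ?_
    exact Eventually.of_forall fun x => (hint x)
  simpa using h2

lemma H_hasDeriv : HasDerivAt (fun a => Real.log (2 / Real.sqrt Real.pi * Φ a))
    (2 / Real.sqrt Real.pi) 0 := by
  have hπ : (0:ℝ) < Real.sqrt Real.pi := Real.sqrt_pos.mpr Real.pi_pos
  have hG : HasDerivAt (fun a => 2 / Real.sqrt Real.pi * Φ a)
      (2 / Real.sqrt Real.pi * 1) 0 := Φ_hasDeriv.const_mul _
  have hG0 : 2 / Real.sqrt Real.pi * Φ 0 = 1 := by
    rw [Φ_zero]; field_simp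
  have h := (Real.hasDerivAt_log (x := 2 / Real.sqrt Real.pi * Φ 0)
    (by rw [hG0]; norm_num)).comp 0 hG
  simpa [Function.comp_def, hG0] using h

lemma slope_tendsto : Tendsto (fun a => -Real.log (2 / Real.sqrt Real.pi * Φ a) / a)
    (nhdsWithin 0 {(0:ℝ)}ᶜ) (nhds (-2 / Real.sqrt Real.pi)) := by
  have h1 := hasDerivAt_iff_tendsto_slope.mp H_hasDeriv
  have hH0 : Real.log (2 / Real.sqrt Real.pi * Φ 0) = 0 := by
    rw [show 2 / Real.sqrt Real.pi * Φ 0 = 1 from by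
      rw [Φ_zero]; field_simp, Real.log_one]
  have h2 : Tendsto (fun a => Real.log (2 / Real.sqrt Real.pi * Φ a) / a)
      (nhdsWithin 0 {(0:ℝ)}ᶜ) (nhds (2 / Real.sqrt Real.pi)) := by
    refine h1.congr fun a => ?_
    simp [slope_def_field, hH0]
  have h3 := h2.neg
  simp only [← neg_div, neg_div'] at *
  convert h3 using 2

/-- The key computation of the integral for `t > 0`. -/
lemma main_eq (ε : ℝ) (hε : 0 < ε) (t : ℝ) (ht : 0 < t) :
    (-2 * ε * Real.log ((Real.sqrt (4 * Real.pi * ε * t))⁻¹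
        * ∫ y : ℝ, Real.exp (-(y ^ 2) / (4 * ε * t) + |y| / (2 * ε))) + t / 2)
      / Real.sqrt (t * ε)
    = -Real.log (2 / Real.sqrt Real.pi * Φ (Real.sqrt (t * ε) / (2 * ε)))
      / (Real.sqrt (t * ε) / (2 * ε)) := by
  have h4 : (0:ℝ) < 4 * ε * t := by positivity
  set s : ℝ := (Real.sqrt (4 * ε * t))⁻¹ with hs_def
  have hs4 : 0 < Real.sqrt (4 * ε * t) := Real.sqrt_pos.mpr h4
  have hs : 0 < s := inv_pos.mpr hs4
  have hs2 : s ^ 2 = (4 * ε * t)⁻¹ := by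
    rw [hs_def, inv_pow, Real.sq_sqrt h4.le]
  set a : ℝ := Real.sqrt (t * ε) / (2 * ε) with ha_def
  have hsqtε : 0 < Real.sqrt (t * ε) := Real.sqrt_pos.mpr (mul_pos ht hε)
  have ha : 0 < a := by positivity
  have h4s : Real.sqrt (4 * ε * t) = 2 * Real.sqrt (ε * t) := by
    rw [show 4 * ε * t = 2 ^ 2 * (ε * t) by ring, Real.sqrt_mul (by positivity),
      Real.sqrt_sq (by norm_num)]
  have hts : t * s = a := by
    have hmm : Real.sqrt (ε * t) * Real.sqrt (ε * t) = ε * t :=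
      Real.mul_self_sqrt (by positivity)
    rw [hs_def, h4s, ha_def, mul_comm t ε]
    rw [show t * (2 * Real.sqrt (ε * t))⁻¹ = t / (2 * Real.sqrt (ε * t)) from
      (div_eq_mul_inv _ _).symm]
    rw [div_eq_div_iff (by positivity) (by positivity)]
    linear_combination (-2 : ℝ) * hmm
  -- step 1 : reduce to Ioi 0
  have h1 : (∫ y : ℝ, Real.exp (-(y ^ 2) / (4 * ε * t) + |y| / (2 * ε)))
      = 2 * ∫ y in Ioi (0:ℝ), Real.exp (-(y ^ 2) / (4 * ε * t) + y / (2 * ε)) := by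
    rw [← integral_comp_abs
      (f := fun u : ℝ => Real.exp (-(u ^ 2) / (4 * ε * t) + u / (2 * ε)))]
    simp_rw [sq_abs]
  -- step 2 : complete the square
  have h2 : (∫ y in Ioi (0:ℝ), Real.exp (-(y ^ 2) / (4 * ε * t) + y / (2 * ε)))
      = ∫ y in Ioi (0:ℝ), Real.exp (t / (4 * ε)) * Real.exp (-((y + -t) * s) ^ 2) := by
    refine setIntegral_congr_fun measurableSet_Ioi fun y _ => ?_
    rw [← Real.exp_add]
    congr 1
    rw [mul_pow, hs2]
    field_simp
    ring
  -- step 3 : pull out the constant, shift and scale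
  have h3 : (∫ y in Ioi (0:ℝ), Real.exp (t / (4 * ε)) * Real.exp (-((y + -t) * s) ^ 2))
      = Real.exp (t / (4 * ε)) * (s⁻¹ * Φ a) := by
    rw [MeasureTheory.integral_const_mul]
    congr 1
    rw [integral_comp_add_right_Ioi' (fun z => Real.exp (-(z * s) ^ 2)) 0 (-t), zero_add]
    rw [integral_comp_mul_right_Ioi (fun z => Real.exp (-z ^ 2)) (-t) hs]
    rw [smul_eq_mul]
    congr 1
    rw [Φ, show -t * s = -(t * s) by ring, hts]
  -- combine
  have hΦ : 0 < Φ a := Φ_pos a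
  have hπ : (0:ℝ) < Real.sqrt Real.pi := Real.sqrt_pos.mpr Real.pi_pos
  have hsplit : Real.sqrt (4 * Real.pi * ε * t) = Real.sqrt Real.pi * Real.sqrt (4 * ε * t) := by
    rw [show 4 * Real.pi * ε * t = Real.pi * (4 * ε * t) by ring,
      Real.sqrt_mul Real.pi_pos.le]
  have hval : (Real.sqrt (4 * Real.pi * ε * t))⁻¹
      * ∫ y : ℝ, Real.exp (-(y ^ 2) / (4 * ε * t) + |y| / (2 * ε))
      = Real.exp (t / (4 * ε)) * (2 / Real.sqrt Real.pi * Φ a) := by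
    rw [h1, h2, h3, hsplit, hs_def, inv_inv]
    field_simp
  rw [hval, Real.log_mul (Real.exp_ne_zero _) (by positivity), Real.log_exp]
  set L := Real.log (2 / Real.sqrt Real.pi * Φ a) with hL_def
  rw [ha_def]
  have hq : Real.sqrt (t * ε) ≠ 0 := ne_of_gt hsqtε
  field_simp
  ring

end Statement7Aux

open Statement7Aux in
/-- Fix `ε > 0` and let
`u^ε(0,t) = -2ε log[(4πεt)^{-1/2} ∫_ℝ e^{-y²/(4εt) + |y|/(2ε)} dy]` for `t > 0`. Then
`(u^ε(0,t) + t/2)/√(tε) → -2/√π` as `t → 0⁺`. -/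
theorem statement7 (ε : ℝ) (hε : 0 < ε) :
    Filter.Tendsto
      (fun t : ℝ =>
        (-2 * ε * Real.log ((Real.sqrt (4 * Real.pi * ε * t))⁻¹
            * ∫ y : ℝ, Real.exp (-(y ^ 2) / (4 * ε * t) + |y| / (2 * ε))) + t / 2)
          / Real.sqrt (t * ε))
      (nhdsWithin 0 (Set.Ioi 0)) (nhds (-2 / Real.sqrt Real.pi)) := by
  have hmap : Tendsto (fun t : ℝ => Real.sqrt (t * ε) / (2 * ε))
      (nhdsWithin 0 (Set.Ioi 0)) (nhdsWithin 0 {(0:ℝ)}ᶜ) := by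
    rw [tendsto_nhdsWithin_iff]
    constructor
    · have hc : Tendsto (fun t : ℝ => Real.sqrt (t * ε) / (2 * ε)) (nhds 0)
          (nhds (Real.sqrt (0 * ε) / (2 * ε))) := by
        exact ((Real.continuous_sqrt.comp (continuous_id.mul continuous_const)).div_const
          _).tendsto 0
      simp only [zero_mul, Real.sqrt_zero, zero_div] at hc
      exact hc.mono_left nhdsWithin_le_nhds
    · filter_upwards [self_mem_nhdsWithin] with t ht
      have : 0 < Real.sqrt (t * ε) := Real.sqrt_pos.mpr (mul_pos ht hε)
      simp only [Set.mem_compl_iff, Set.mem_singleton_iff]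
      positivity
  have hcomp := slope_tendsto.comp hmap
  refine hcomp.congr' ?_
  filter_upwards [self_mem_nhdsWithin] with t ht
  exact (main_eq ε hε t ht).symm
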